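/- Let L be a noncommutative Lie algebra over a field F with dim L ≤ 3. Then the commuting graph Γ(L) is disconnected. -/

import Mathlib

/-- The commuting graph of a Lie algebra `L` over `F`: vertices are the elements of
`L` outside the center, and two distinct vertices are adjacent iff they commute. -/
def commutingGraph (F : Type*) [CommRing F] (L : Type*) [LieRing L] [LieAlgebra F L] :
    SimpleGraph {x : L // x ∉ LieAlgebra.center F L} where
  Adj x y := x ≠ y ∧ ⁅(x : L), (y : L)⁆ = 0
  symm := ⟨fun x y h => ⟨h.1.symm, by rw [← lie_skew, h.2, neg_zero]⟩⟩
  loopless := ⟨fun x h => h.1 rfl⟩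

/-- Key lemma: in a Lie algebra of rank ≤ 3, the centralizer of a noncentral element is
abelian. -/
lemma key_abelian {F : Type*} [Field F] {L : Type*} [LieRing L] [LieAlgebra F L]
    (hdim : Module.rank F L ≤ 3) {x a b : L} (hx : x ∉ LieAlgebra.center F L)
    (ha : ⁅x, a⁆ = 0) (hb : ⁅x, b⁆ = 0) : ⁅a, b⁆ = 0 := by
  by_contra hab
  have hx0 : x ≠ 0 := by
    rintro rfl
    exact hx (by simp [LieAlgebra.center, LieModule.mem_maxTrivSubmodule])
  -- x is not in the span of {a, b}
  have hxs : x ∉ Submodule.span F ({a, b} : Set L) := by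
    intro hmem
    rw [Submodule.mem_span_pair] at hmem
    obtain ⟨c, d, hcd⟩ := hmem
    have h1 : ⁅x, a⁆ = d • ⁅b, a⁆ := by rw [← hcd]; simp
    have h2 : ⁅x, b⁆ = c • ⁅a, b⁆ := by rw [← hcd]; simp
    have hd : d = 0 := by
      rcases smul_eq_zero.mp (h1 ▸ ha).symm.symm with h | h
      · exact h
      · exact absurd (by rw [← lie_skew, h, neg_zero]) hab
    have hc : c = 0 := by
      rcases smul_eq_zero.mp (h2 ▸ hb).symm.symm with h | h
      · exact h
      · exact absurd h hab
    exact hx0 (by rw [← hcd, hc, hd, zero_smul, zero_smul, add_zero])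
  -- a, b are linearly independent
  have liab : LinearIndependent F ![a, b] := by
    rw [LinearIndependent.pair_iff]
    intro s t hst
    constructor
    · have : s • ⁅a, b⁆ = 0 := by
        have := congrArg (fun z => ⁅z, b⁆) hst
        simpa using this
      rcases smul_eq_zero.mp this with h | h
      · exact h
      · exact absurd h hab
    · have : t • ⁅b, a⁆ = 0 := by
        have := congrArg (fun z => ⁅z, a⁆) hst
        simpa using this
      rcases smul_eq_zero.mp this with h | h
      · exact h
      · exact absurd (by rw [← lie_skew, h, neg_zero]) hab
  -- hence x, a, b are linearly independent
  have li3 : LinearIndependent F ![x, a, b] := by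
    rw [show (![x, a, b] : Fin 3 → L) = Fin.cons x ![a, b] by
      funext i; fin_cases i <;> rfl]
    rw [linearIndependent_fin_cons]
    refine ⟨liab, ?_⟩
    have : Set.range ![a, b] = ({a, b} : Set L) := by
      ext z; simp [Matrix.range_cons, Matrix.range_empty]; tauto
    rwa [this]
  -- finite dimensionality
  haveI : FiniteDimensional F L :=
    Module.rank_lt_aleph0_iff.mp (lt_of_le_of_lt hdim (by exact_mod_cast Cardinal.nat_lt_aleph0 3))
  have hfr : Module.finrank F L ≤ 3 := by
    exact Module.finrank_le_of_rank_le (by exact_mod_cast hdim)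
  -- the span of {x, a, b} is everything
  have hspan : Submodule.span F (Set.range ![x, a, b]) = ⊤ := by
    apply Submodule.eq_top_of_finrank_eq
    rw [finrank_span_eq_card li3]
    simp only [Fintype.card_fin]
    have h3 : 3 ≤ Module.finrank F L := by simpa using li3.fintype_card_le_finrank
    omega
  -- so x is central, contradiction
  have hall : ∀ y : L, ⁅x, y⁆ = 0 := by
    intro y
    have hy : y ∈ Submodule.span F (Set.range ![x, a, b]) := hspan ▸ Submodule.mem_top
    induction hy using Submodule.span_induction with
    | mem z hz =>
      rcases Set.mem_range.mp hz with ⟨i, rfl⟩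
      fin_cases i
      · exact lie_self x
      · exact ha
      · exact hb
    | zero => exact lie_zero x
    | add u v _ _ hu hv => rw [lie_add, hu, hv, add_zero]
    | smul c u _ hu => rw [lie_smul, hu, smul_zero]
  exact hx (by
    rw [LieModule.mem_maxTrivSubmodule]
    intro y
    rw [← lie_skew, hall y, neg_zero])

theorem stmt7 (F : Type*) [Field F] (L : Type*) [LieRing L] [LieAlgebra F L]
    (hnc : ∃ x y : L, ⁅x, y⁆ ≠ 0) (hdim : Module.rank F L ≤ 3) :
    ¬ (commutingGraph F L).Connected := by
  intro hconn
  obtain ⟨x, y, hxy⟩ := hnc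
  have hx : x ∉ LieAlgebra.center F L := fun h => by
    rw [LieModule.mem_maxTrivSubmodule] at h
    exact hxy (by rw [← lie_skew, h y, neg_zero])
  have hy : y ∉ LieAlgebra.center F L := fun h => by
    rw [LieModule.mem_maxTrivSubmodule] at h
    exact hxy (h x)
  obtain ⟨w⟩ := hconn.preconnected ⟨x, hx⟩ ⟨y, hy⟩
  -- along any walk starting at x, every vertex commutes with x
  have main : ∀ (u v : {z : L // z ∉ LieAlgebra.center F L})
      (_ : (commutingGraph F L).Walk u v), ⁅x, (u : L)⁆ = 0 → ⁅x, (v : L)⁆ = 0 := by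
    intro u v w
    induction w with
    | nil => exact id
    | @cons p q r hpq _ ih =>
      intro hp
      apply ih
      exact key_abelian hdim p.prop (by rw [← lie_skew, hp, neg_zero]) (hpq : p ≠ q ∧ ⁅(p : L), (q : L)⁆ = 0).2
  exact hxy (main _ _ w (lie_self x))
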